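/- Let r ≥ 1 and let a = (a_1, …, a_r) ∈ ℤ^r satisfy q(a) = 2, where q is the integral quadratic form corresponding to the Dynkin diagram A_r. Then there exists a sign ε ∈ {1, −1} such that one of the following holds: (i) there exist indices 1 ≤ i_1 ≤ j_1 and i_2 ≤ j_2 ≤ r with j_1 + 2 ≤ i_2 (so the two blocks are separated by at least one zero) and a sign δ ∈ {1, −1} such that a_t = ε for i_1 ≤ t ≤ j_1, a_t = εδ for i_2 ≤ t ≤ j_2, and a_t = 0 for all other t; or (ii) there exist indices 1 ≤ i_1 < i_2 ≤ j_1 < j_2 ≤ r such that a_t = 2ε for i_2 ≤ t ≤ j_1, a_t = ε for i_1 ≤ t < i_2 and for j_1 < t ≤ j_2, and a_t = 0 for all other t. -/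

import Mathlib

set_option maxHeartbeats 2000000 in
/-- If `q(a) = 2` for the quadratic form `q` of Dynkin type `A_r`
(with `a` indexed `1, …, r`), then up to a global sign `ε`, either `a` consists of
two interval blocks with entries `ε` resp. `εδ` (`δ = ±1`) separated by at least
one zero, or `a` has the shape `(…,0,ε,…,ε,2ε,…,2ε,ε,…,ε,0,…)` with nonempty
blocks of `ε`'s on both sides of a nonempty block of `2ε`'s. -/
theorem stmt_1 (r : ℕ) (hr : 1 ≤ r) (a : ℕ → ℤ)
    (hq : (∑ i ∈ Finset.Icc 1 r, (a i) ^ 2)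
        - (∑ i ∈ Finset.Icc 1 (r - 1), a i * a (i + 1)) = 2) :
    ∃ ε : ℤ, (ε = 1 ∨ ε = -1) ∧
      ((∃ i₁ j₁ i₂ j₂ : ℕ, ∃ δ : ℤ, (δ = 1 ∨ δ = -1) ∧
          1 ≤ i₁ ∧ i₁ ≤ j₁ ∧ j₁ + 2 ≤ i₂ ∧ i₂ ≤ j₂ ∧ j₂ ≤ r ∧
          ∀ i : ℕ, 1 ≤ i → i ≤ r →
            a i = if i₁ ≤ i ∧ i ≤ j₁ then ε
                  else if i₂ ≤ i ∧ i ≤ j₂ then ε * δ else 0) ∨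
       (∃ i₁ i₂ j₁ j₂ : ℕ,
          1 ≤ i₁ ∧ i₁ < i₂ ∧ i₂ ≤ j₁ ∧ j₁ < j₂ ∧ j₂ ≤ r ∧
          ∀ i : ℕ, 1 ≤ i → i ≤ r →
            a i = if i₂ ≤ i ∧ i ≤ j₁ then 2 * ε
                  else if (i₁ ≤ i ∧ i < i₂) ∨ (j₁ < i ∧ i ≤ j₂) then ε else 0)) := by
  classical
  set b : ℕ → ℤ := fun i => if 1 ≤ i ∧ i ≤ r then a i else 0 with hbdef
  set d : ℕ → ℤ := fun i => b (i + 1) - b i with hddef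
  have hb0 : b 0 = 0 := by simp [hbdef]
  have hbr : ∀ k, r < k → b k = 0 := by
    intro k hk; simp only [hbdef]; rw [if_neg]; omega
  have hba : ∀ i, 1 ≤ i → i ≤ r → b i = a i := by
    intro i h1 h2; simp [hbdef, h1, h2]
  -- telescoping sum of differences
  have hsum : ∑ i ∈ Finset.range (r + 1), d i = 0 := by
    simp only [hddef]
    rw [Finset.sum_range_sub b, hbr (r + 1) (by omega), hb0, sub_zero]
  -- sum of b squares
  have hbsq : ∑ i ∈ Finset.range (r + 1), b i ^ 2 = ∑ i ∈ Finset.Icc 1 r, a i ^ 2 := by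
    rw [← Finset.sum_subset (s₁ := Finset.Icc 1 r) (s₂ := Finset.range (r + 1))
      (by intro x hx; simp only [Finset.mem_Icc] at hx; simp only [Finset.mem_range]; omega)
      (by intro x hx hnx
          simp only [Finset.mem_range] at hx
          simp only [Finset.mem_Icc] at hnx
          have : x = 0 := by omega
          rw [this, hb0]; ring)]
    apply Finset.sum_congr rfl
    intro x hx
    simp only [Finset.mem_Icc] at hx
    rw [hba x hx.1 hx.2]
  -- shifted sum
  have hshift : ∑ i ∈ Finset.range (r + 1), b (i + 1) ^ 2
      = ∑ i ∈ Finset.range (r + 1), b i ^ 2 := by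
    have h1 : ∑ i ∈ Finset.range (r + 2), b i ^ 2
        = (∑ i ∈ Finset.range (r + 1), b (i + 1) ^ 2) + b 0 ^ 2 :=
      Finset.sum_range_succ' (fun i => b i ^ 2) (r + 1)
    have h2 : ∑ i ∈ Finset.range (r + 2), b i ^ 2
        = (∑ i ∈ Finset.range (r + 1), b i ^ 2) + b (r + 1) ^ 2 :=
      Finset.sum_range_succ (fun i => b i ^ 2) (r + 1)
    rw [hb0] at h1
    rw [hbr (r + 1) (by omega)] at h2
    linarith
  -- cross sum
  have hcross : ∑ i ∈ Finset.range (r + 1), b i * b (i + 1)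
      = ∑ i ∈ Finset.Icc 1 (r - 1), a i * a (i + 1) := by
    rw [← Finset.sum_subset (s₁ := Finset.Icc 1 (r - 1)) (s₂ := Finset.range (r + 1))
      (by intro x hx; simp only [Finset.mem_Icc] at hx; simp only [Finset.mem_range]; omega)
      (by intro x hx hnx
          simp only [Finset.mem_range] at hx
          simp only [Finset.mem_Icc] at hnx
          have : x = 0 ∨ x = r := by omega
          rcases this with h | h
          · rw [h, hb0]; ring
          · rw [h, hbr (r + 1) (by omega)]; ring)]
    apply Finset.sum_congr rfl
    intro x hx
    simp only [Finset.mem_Icc] at hx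
    rw [hba x hx.1 (by omega), hba (x + 1) (by omega) (by omega)]
  -- sum of squares of differences
  have hsq : ∑ i ∈ Finset.range (r + 1), d i ^ 2 = 4 := by
    have hexp : ∑ i ∈ Finset.range (r + 1), d i ^ 2
        = ∑ i ∈ Finset.range (r + 1), (b (i + 1) ^ 2 + b i ^ 2 - 2 * (b i * b (i + 1))) := by
      apply Finset.sum_congr rfl
      intro i _
      simp only [hddef]; ring
    rw [hexp, Finset.sum_sub_distrib, Finset.sum_add_distrib, ← Finset.mul_sum]
    rw [hshift, hbsq, hcross]
    linarith
  -- support of d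
  set T := (Finset.range (r + 1)).filter (fun i => d i ≠ 0) with hT
  have hTsum : ∑ i ∈ T, d i = 0 := by
    rw [hT, Finset.sum_filter_ne_zero]; exact hsum
  have hTsq : ∑ i ∈ T, d i ^ 2 = 4 := by
    rw [← hsq]
    apply Finset.sum_subset (Finset.filter_subset _ _)
    intro x hx hxn
    have : ¬ d x ≠ 0 := by
      intro h; exact hxn (Finset.mem_filter.mpr ⟨hx, h⟩)
    push_neg at this
    rw [this]; ring
  have hTne : ∀ i ∈ T, d i ≠ 0 := fun i hi => (Finset.mem_filter.mp hi).2
  have hTr : ∀ i ∈ T, i ≤ r := by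
    intro i hi
    have := Finset.mem_range.mp (Finset.mem_filter.mp hi).1
    omega
  have hsq_le : ∀ i ∈ T, d i ^ 2 ≤ 4 := by
    intro i hi
    calc d i ^ 2 ≤ ∑ j ∈ T, d j ^ 2 :=
          Finset.single_le_sum (fun j _ => sq_nonneg (d j)) hi
      _ = 4 := hTsq
  have hone : ∀ i ∈ T, d i = 1 ∨ d i = -1 := by
    intro i hi
    have h4 : d i ^ 2 ≠ 4 := by
      intro h4
      have hadd := Finset.add_sum_erase T (fun j => d j ^ 2) hi
      have herase : ∑ j ∈ T.erase i, d j ^ 2 = 0 := by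
        omega
      have hzero : ∀ j ∈ T.erase i, d j ^ 2 = 0 :=
        (Finset.sum_eq_zero_iff_of_nonneg (fun j _ => sq_nonneg (d j))).mp herase
      have hsingle : T = {i} := by
        apply Finset.eq_singleton_iff_unique_mem.mpr
        refine ⟨hi, ?_⟩
        intro j hj
        by_contra hne
        have hj0 : d j ^ 2 = 0 := hzero j (Finset.mem_erase.mpr ⟨hne, hj⟩)
        have hjne := hTne j hj
        have : d j = 0 := by nlinarith [sq_nonneg (d j)]
        exact hjne this
      rw [hsingle, Finset.sum_singleton] at hTsum
      rw [hTsum] at h4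
      norm_num at h4
    have hne := hTne i hi
    have hle := hsq_le i hi
    have hb1 : d i ≤ 2 := by nlinarith
    have hb2 : -2 ≤ d i := by nlinarith
    have hcases : d i = -2 ∨ d i = -1 ∨ d i = 1 ∨ d i = 2 := by omega
    rcases hcases with h | h | h | h
    · exact absurd (by rw [h]; norm_num) h4
    · exact Or.inr h
    · exact Or.inl h
    · exact absurd (by rw [h]; norm_num) h4
  -- T has exactly 4 elements
  have hcard : T.card = 4 := by
    have h1 : ∑ i ∈ T, d i ^ 2 = ∑ i ∈ T, 1 := by
      apply Finset.sum_congr rfl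
      intro i hi
      rcases hone i hi with h | h <;> rw [h] <;> norm_num
    rw [h1, Finset.sum_const] at hTsq
    have h2 : (T.card : ℤ) = 4 := by simpa using hTsq
    exact_mod_cast h2
  -- extract sorted elements
  have hlen : (T.sort (· ≤ ·)).length = 4 := by rw [Finset.length_sort]; exact hcard
  have hsorted := List.sortedLT_iff_pairwise.mp (Finset.sortedLT_sort T)
  obtain ⟨k1, k2, k3, k4, hL⟩ : ∃ k1 k2 k3 k4, T.sort (· ≤ ·) = [k1, k2, k3, k4] := by
    rcases e : T.sort (· ≤ ·) with _ | ⟨x1, _ | ⟨x2, _ | ⟨x3, _ | ⟨x4, _ | ⟨x5, t⟩⟩⟩⟩⟩ <;>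
      rw [e] at hlen <;> simp at hlen
    exact ⟨x1, x2, x3, x4, rfl⟩
  rw [hL] at hsorted
  have h12 : k1 < k2 := List.rel_of_pairwise_cons hsorted (by simp)
  have ht1 : List.Pairwise (· < ·) [k2, k3, k4] := hsorted.of_cons
  have h23 : k2 < k3 := List.rel_of_pairwise_cons ht1 (by simp)
  have ht2 : List.Pairwise (· < ·) [k3, k4] := ht1.of_cons
  have h34 : k3 < k4 := List.rel_of_pairwise_cons ht2 (by simp)
  have hmem : ∀ i, i ∈ T ↔ (i = k1 ∨ i = k2 ∨ i = k3 ∨ i = k4) := by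
    intro i
    rw [← Finset.mem_sort (α := ℕ) (· ≤ ·), hL]
    simp
  have hk1 : k1 ∈ T := (hmem k1).mpr (Or.inl rfl)
  have hk2 : k2 ∈ T := (hmem k2).mpr (Or.inr (Or.inl rfl))
  have hk3 : k3 ∈ T := (hmem k3).mpr (Or.inr (Or.inr (Or.inl rfl)))
  have hk4 : k4 ∈ T := (hmem k4).mpr (Or.inr (Or.inr (Or.inr rfl)))
  have hk4r : k4 ≤ r := hTr k4 hk4
  -- sum of the four jumps
  have hsum4 : d k1 + d k2 + d k3 + d k4 = 0 := by
    have hTeq : T = {k1, k2, k3, k4} := by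
      apply Finset.ext
      intro i
      rw [hmem]
      simp
    rw [hTeq] at hTsum
    rw [Finset.sum_insert (by simp; omega), Finset.sum_insert (by simp; omega),
      Finset.sum_pair (by omega)] at hTsum
    linarith
  have hdzero : ∀ k, k ∉ T → d k = 0 := by
    intro k hk
    by_cases hkr : k ≤ r
    · by_contra hne
      exact hk (Finset.mem_filter.mpr ⟨Finset.mem_range.mpr (by omega), hne⟩)
    · have h1 : b k = 0 := hbr k (by omega)
      have h2 : b (k + 1) = 0 := hbr (k + 1) (by omega)
      simp only [hddef]; rw [h1, h2]; ring
  -- value formula for b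
  have hbval : ∀ k, b k = (if k1 < k then d k1 else 0) + (if k2 < k then d k2 else 0)
      + (if k3 < k then d k3 else 0) + (if k4 < k then d k4 else 0) := by
    intro k
    induction k with
    | zero => simp [hb0]
    | succ k ih =>
      have hdk : b (k + 1) = b k + d k := by simp [hddef]
      have hdk2 : d k = (if k1 = k then d k1 else 0) + (if k2 = k then d k2 else 0)
          + (if k3 = k then d k3 else 0) + (if k4 = k then d k4 else 0) := by
        by_cases e1 : k1 = k
        · rw [if_pos e1, if_neg (by omega), if_neg (by omega), if_neg (by omega), e1]; ring
        · by_cases e2 : k2 = k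
          · rw [if_neg e1, if_pos e2, if_neg (by omega), if_neg (by omega), e2]; ring
          · by_cases e3 : k3 = k
            · rw [if_neg e1, if_neg e2, if_pos e3, if_neg (by omega), e3]; ring
            · by_cases e4 : k4 = k
              · rw [if_neg e1, if_neg e2, if_neg e3, if_pos e4, e4]; ring
              · rw [if_neg e1, if_neg e2, if_neg e3, if_neg e4]
                have : k ∉ T := by
                  rw [hmem]; push_neg
                  exact ⟨fun h => e1 h.symm, fun h => e2 h.symm, fun h => e3 h.symm,
                    fun h => e4 h.symm⟩
                rw [hdzero k this]; ring
      have hstep : ∀ (m : ℕ) (v : ℤ),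
          (if m < k + 1 then v else 0) = (if m < k then v else 0) + (if m = k then v else 0) := by
        intro m v
        by_cases e1 : m < k
        · rw [if_pos (by omega), if_pos e1, if_neg (by omega)]; ring
        · by_cases e2 : m = k
          · rw [if_pos (by omega), if_neg e1, if_pos e2]; ring
          · rw [if_neg (by omega), if_neg e1, if_neg e2]; ring
      rw [hdk, ih, hdk2, hstep k1, hstep k2, hstep k3, hstep k4]
      ring
  -- the four jumps are ±1
  have hd1 := hone k1 hk1
  have hd2 := hone k2 hk2
  have hd3 := hone k3 hk3
  have hd4 := hone k4 hk4
  rcases hd1 with h1 | h1 <;> rcases hd2 with h2 | h2 <;>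
    rcases hd3 with h3 | h3 <;> rcases hd4 with h4 | h4
  -- (1,1,1,1): impossible
  · exfalso; omega
  -- (1,1,1,-1): impossible
  · exfalso; omega
  -- (1,1,-1,1): impossible
  · exfalso; omega
  -- (1,1,-1,-1): mountain, ε = 1
  · refine ⟨1, Or.inl rfl, Or.inr ⟨k1 + 1, k2 + 1, k3, k4, by omega, by omega, by omega,
      by omega, by omega, ?_⟩⟩
    intro i hi1 hi2
    rw [← hba i hi1 hi2, hbval i, h1, h2, h3, h4]
    split_ifs <;> omega
  -- (1,-1,1,1): impossible
  · exfalso; omega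
  -- (1,-1,1,-1): two blocks, ε = 1, δ = 1
  · refine ⟨1, Or.inl rfl, Or.inl ⟨k1 + 1, k2, k3 + 1, k4, 1, Or.inl rfl, by omega, by omega,
      by omega, by omega, by omega, ?_⟩⟩
    intro i hi1 hi2
    rw [← hba i hi1 hi2, hbval i, h1, h2, h3, h4]
    split_ifs <;> omega
  -- (1,-1,-1,1): two blocks, ε = 1, δ = -1
  · refine ⟨1, Or.inl rfl, Or.inl ⟨k1 + 1, k2, k3 + 1, k4, -1, Or.inr rfl, by omega, by omega,
      by omega, by omega, by omega, ?_⟩⟩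
    intro i hi1 hi2
    rw [← hba i hi1 hi2, hbval i, h1, h2, h3, h4]
    split_ifs <;> omega
  -- (1,-1,-1,-1): impossible
  · exfalso; omega
  -- (-1,1,1,1): impossible
  · exfalso; omega
  -- (-1,1,1,-1): two blocks, ε = -1, δ = -1
  · refine ⟨-1, Or.inr rfl, Or.inl ⟨k1 + 1, k2, k3 + 1, k4, -1, Or.inr rfl, by omega, by omega,
      by omega, by omega, by omega, ?_⟩⟩
    intro i hi1 hi2
    rw [← hba i hi1 hi2, hbval i, h1, h2, h3, h4]
    split_ifs <;> omega
  -- (-1,1,-1,1): two blocks, ε = -1, δ = 1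
  · refine ⟨-1, Or.inr rfl, Or.inl ⟨k1 + 1, k2, k3 + 1, k4, 1, Or.inl rfl, by omega, by omega,
      by omega, by omega, by omega, ?_⟩⟩
    intro i hi1 hi2
    rw [← hba i hi1 hi2, hbval i, h1, h2, h3, h4]
    split_ifs <;> omega
  -- (-1,1,-1,-1): impossible
  · exfalso; omega
  -- (-1,-1,1,1): mountain, ε = -1
  · refine ⟨-1, Or.inr rfl, Or.inr ⟨k1 + 1, k2 + 1, k3, k4, by omega, by omega, by omega,
      by omega, by omega, ?_⟩⟩
    intro i hi1 hi2
    rw [← hba i hi1 hi2, hbval i, h1, h2, h3, h4]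
    split_ifs <;> omega
  -- (-1,-1,1,-1): impossible
  · exfalso; omega
  -- (-1,-1,-1,1): impossible
  · exfalso; omega
  -- (-1,-1,-1,-1): impossible
  · exfalso; omega
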